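/- Let h : ℝ^{n×n} → ℝ be defined by h(A) = tr(expm(A ⊙ A)), where A ⊙ A is the entrywise (Hadamard) square of A, expm is the matrix exponential, and tr is the trace. Then h is differentiable at every real n×n matrix A, and its differential applied to a direction H is Dh(A)[H] = Σ_{i,j} (expm(A ⊙ A))_{ji} · 2A_{ij} · H_{ij}; equivalently, the gradient of h at A is ∇h(A) = expm(A ⊙ A)ᵀ ⊙ 2A with respect to the trace inner product ⟨X, Y⟩ = Σ_{i,j} X_{ij}Y_{ij}. -/

import Mathlib

open Matrix

attribute [local instance] Matrix.normedAddCommGroup Matrix.normedSpace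
open scoped Nat

namespace TraceExpAux
variable {n : ℕ}
local notation "M" => Matrix (Fin n) (Fin n) ℝ

lemma norm_mul_le' (X Y : M) : ‖X * Y‖ ≤ n * ‖X‖ * ‖Y‖ := by
  rw [Matrix.norm_le_iff (by positivity)]
  intro i j
  calc ‖(X * Y) i j‖ ≤ ∑ k, ‖X i k * Y k j‖ := by
        rw [Matrix.mul_apply]; exact norm_sum_le _ _
    _ ≤ ∑ _k : Fin n, ‖X‖ * ‖Y‖ := Finset.sum_le_sum fun k _ => by
        rw [norm_mul]
        exact mul_le_mul (Matrix.norm_entry_le_entrywise_sup_norm X)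
          (Matrix.norm_entry_le_entrywise_sup_norm Y) (norm_nonneg _) (norm_nonneg _)
    _ = n * ‖X‖ * ‖Y‖ := by
        simp [Finset.sum_const, Finset.card_univ, mul_assoc]

lemma norm_had_le (X Y : M) : ‖X ⊙ Y‖ ≤ ‖X‖ * ‖Y‖ := by
  rw [Matrix.norm_le_iff (by positivity)]
  intro i j
  rw [Matrix.hadamard_apply, norm_mul]
  exact mul_le_mul (Matrix.norm_entry_le_entrywise_sup_norm X)
    (Matrix.norm_entry_le_entrywise_sup_norm Y) (norm_nonneg _) (norm_nonneg _)

lemma norm_trace_le (X : M) : ‖X.trace‖ ≤ n * ‖X‖ := by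
  calc ‖X.trace‖ ≤ ∑ i, ‖X i i‖ := norm_sum_le _ _
    _ ≤ ∑ _i : Fin n, ‖X‖ := Finset.sum_le_sum fun i _ =>
        Matrix.norm_entry_le_entrywise_sup_norm X
    _ = n * ‖X‖ := by simp [Finset.sum_const, Finset.card_univ]

lemma norm_one_le : ‖(1 : M)‖ ≤ 1 := by
  rw [Matrix.norm_le_iff zero_le_one]
  intro i j
  rw [Matrix.one_apply]
  split <;> simp

lemma norm_pow_le (X : M) {b : ℝ} (hb : 0 ≤ b) (hX : ‖X‖ ≤ b) (m : ℕ) :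
    ‖X ^ m‖ ≤ (n * b) ^ m := by
  induction m with
  | zero => simpa using norm_one_le
  | succ m ih =>
      calc ‖X ^ (m + 1)‖ = ‖X ^ m * X‖ := by rw [pow_succ]
        _ ≤ n * ‖X ^ m‖ * ‖X‖ := norm_mul_le' _ _
        _ ≤ n * (n * b) ^ m * b := by
            have h0 : (0:ℝ) ≤ n := by positivity
            have h1 : (0:ℝ) ≤ (n*b)^m := by positivity
            have h2 := norm_nonneg (X ^ m)
            have h3 := norm_nonneg X
            have e1 : (n:ℝ) * ‖X ^ m‖ * ‖X‖ ≤ n * (n*b)^m * ‖X‖ :=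
              mul_le_mul_of_nonneg_right (mul_le_mul_of_nonneg_left ih h0) h3
            have e2 : (n:ℝ) * (n*b)^m * ‖X‖ ≤ n * (n*b)^m * b :=
              mul_le_mul_of_nonneg_left hX (by positivity)
            linarith
        _ = (n * b) ^ (m + 1) := by ring

noncomputable def mulCLM : M →L[ℝ] M →L[ℝ] M :=
  LinearMap.mkContinuous₂ (LinearMap.mul ℝ M) n fun X Y => norm_mul_le' X Y

@[simp] lemma mulCLM_apply (X Y : M) : mulCLM X Y = X * Y := rfl

noncomputable def hadCLM : M →L[ℝ] M →L[ℝ] M :=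
  LinearMap.mkContinuous₂
    (LinearMap.mk₂ ℝ (· ⊙ ·) (fun a b c => Matrix.add_hadamard c a b)
      (fun c a b => Matrix.smul_hadamard a b c)
      (fun a b c => Matrix.hadamard_add a b c)
      (fun c a b => Matrix.hadamard_smul a b c)) 1
    (fun X Y => by simpa using norm_had_le X Y)

@[simp] lemma hadCLM_apply (X Y : M) : hadCLM X Y = X ⊙ Y := rfl

noncomputable def traceCLM : M →L[ℝ] ℝ :=
  LinearMap.mkContinuous (Matrix.traceLinearMap (Fin n) ℝ ℝ) n fun X => norm_trace_le X

@[simp] lemma traceCLM_apply (X : M) : traceCLM X = X.trace := rfl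

end TraceExpAux

namespace TraceExpAux
variable {n : ℕ}
local notation "M" => Matrix (Fin n) (Fin n) ℝ

noncomputable def powD (k : ℕ) (X : M) : Matrix (Fin n) (Fin n) ℝ →L[ℝ] Matrix (Fin n) (Fin n) ℝ :=
  ∑ i ∈ Finset.range k, (mulCLM (X ^ i)).comp
    ((mulCLM : M →L[ℝ] M →L[ℝ] M).flip (X ^ (k - 1 - i)))

lemma powD_apply (k : ℕ) (X H : M) :
    powD k X H = ∑ i ∈ Finset.range k, X ^ i * (H * X ^ (k - 1 - i)) := by
  simp [powD, ContinuousLinearMap.sum_apply]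
  rfl

lemma hasFDerivAt_pow' (k : ℕ) (X : M) :
    HasFDerivAt (fun Y : M => Y ^ k) (powD k X) X := by
  induction k with
  | zero =>
      simp only [pow_zero, powD, Finset.range_zero, Finset.sum_empty]
      exact hasFDerivAt_const _ _
  | succ k ih =>
      have hB := (mulCLM (n := n)).isBoundedBilinearMap.hasFDerivAt (X ^ k, X)
      have hi : HasFDerivAt (fun Y : M => (Y ^ k, Y))
          ((powD k X).prod (ContinuousLinearMap.id ℝ M)) X :=
        ih.prodMk (hasFDerivAt_id X)
      have hc := HasFDerivAt.comp (f := fun Y : M => (Y ^ k, Y)) X hB hi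
      have hfun : ((fun x : M × M => mulCLM x.1 x.2) ∘ fun Y : M => (Y ^ k, Y))
          = fun Y : M => Y ^ (k + 1) := by
        funext Y; simp [pow_succ]
      rw [← hfun]
      refine hc.congr_fderiv (Eq.symm ?_)
      refine ContinuousLinearMap.ext fun H => ?_
      have hD : ((mulCLM (n := n)).isBoundedBilinearMap.deriv (X ^ k, X)).comp
            ((powD k X).prod (ContinuousLinearMap.id ℝ M)) H
          = X ^ k * H + powD k X H * X := by
        rfl
      refine Eq.trans ?_ hD.symm
      rw [powD_apply, Finset.sum_range_succ]
      simp only [Nat.add_sub_cancel]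
      have hstep : ∀ i ∈ Finset.range k,
          X ^ i * (H * X ^ (k - i)) = X ^ i * (H * X ^ (k - 1 - i)) * X := by
        intro i hi'
        have hik : i < k := Finset.mem_range.mp hi'
        have : k - i = (k - 1 - i) + 1 := by omega
        rw [this, pow_succ]
        noncomm_ring
      calc ∑ i ∈ Finset.range k, X ^ i * (H * X ^ (k - i)) + X ^ k * (H * X ^ (k - k)) 
          = ∑ i ∈ Finset.range k, X ^ i * (H * X ^ (k - 1 - i)) * X + X ^ k * H := by
            rw [Finset.sum_congr rfl hstep]
            simp
        _ = X ^ k * H + powD k X H * X := by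
            rw [powD_apply, Finset.sum_mul]
            ring_nf
            abel

end TraceExpAux

namespace TraceExpAux
variable {n : ℕ}
local notation "M" => Matrix (Fin n) (Fin n) ℝ

noncomputable instance normedAddCommGroupCLM : NormedAddCommGroup (M →L[ℝ] ℝ) :=
  ContinuousLinearMap.toNormedAddCommGroup

noncomputable instance normedSpaceCLM : NormedSpace ℝ (M →L[ℝ] ℝ) :=
  ContinuousLinearMap.toNormedSpace

instance completeSpaceCLM :
    @CompleteSpace (M →L[ℝ] ℝ) (normedAddCommGroupCLM (n := n)).toUniformSpace := by
  haveI : SequentialSpace M := inferInstanceAs (SequentialSpace (Fin n → Fin n → ℝ))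
  exact ContinuousLinearMap.instCompleteSpace

noncomputable def fD (k : ℕ) (X : M) : Matrix (Fin n) (Fin n) ℝ →L[ℝ] ℝ :=
  (k ! : ℝ)⁻¹ • (traceCLM.comp (powD k X))

lemma hasFDerivAt_fterm (k : ℕ) (X : M) :
    HasFDerivAt (fun Y : M => (k ! : ℝ)⁻¹ • (Y ^ k).trace) (fD k X) X :=
  by have := ((traceCLM.hasFDerivAt).comp X (hasFDerivAt_pow' k X)).const_smul (k ! : ℝ)⁻¹; exact this

lemma norm_fD_le (k : ℕ) {X : M} {b : ℝ} (hb : 0 ≤ b) (hX : ‖X‖ ≤ b) :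
    ‖fD k X‖ ≤ (k ! : ℝ)⁻¹ * (k * ((n : ℝ) ^ 3 * (n * b) ^ (k - 1))) := by
  have hpos : (0:ℝ) ≤ (k ! : ℝ)⁻¹ * (k * ((n : ℝ) ^ 3 * (n * b) ^ (k - 1))) := by positivity
  refine ContinuousLinearMap.opNorm_le_bound _ hpos fun H => ?_
  have hterm : ∀ i ∈ Finset.range k,
      ‖X ^ i * (H * X ^ (k - 1 - i))‖ ≤ (n : ℝ) ^ 2 * (n * b) ^ (k - 1) * ‖H‖ := by
    intro i hi
    have hik : i < k := Finset.mem_range.mp hi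
    calc ‖X ^ i * (H * X ^ (k - 1 - i))‖
        ≤ n * ‖X ^ i‖ * ‖H * X ^ (k - 1 - i)‖ := norm_mul_le' _ _
      _ ≤ n * (n * b) ^ i * (n * ‖H‖ * (n * b) ^ (k - 1 - i)) := by
          have h1 := norm_pow_le X hb hX i
          have h2 := norm_pow_le X hb hX (k - 1 - i)
          have h3 : ‖H * X ^ (k - 1 - i)‖ ≤ n * ‖H‖ * (n * b) ^ (k - 1 - i) := by
            calc ‖H * X ^ (k - 1 - i)‖ ≤ n * ‖H‖ * ‖X ^ (k - 1 - i)‖ := norm_mul_le' _ _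
              _ ≤ n * ‖H‖ * (n * b) ^ (k - 1 - i) :=
                  mul_le_mul_of_nonneg_left h2 (by positivity)
          have h4 : (0:ℝ) ≤ n * ‖H‖ * (n * b) ^ (k - 1 - i) := by positivity
          have h5 : (n:ℝ) * ‖X ^ i‖ ≤ n * (n * b) ^ i :=
            mul_le_mul_of_nonneg_left h1 (by positivity)
          exact mul_le_mul h5 h3 (norm_nonneg _) (by positivity)
      _ = (n : ℝ) ^ 2 * ((n * b) ^ i * (n * b) ^ (k - 1 - i)) * ‖H‖ := by ring
      _ = (n : ℝ) ^ 2 * (n * b) ^ (k - 1) * ‖H‖ := by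
          have he : i + (k - 1 - i) = k - 1 := by omega
          rw [← pow_add, he]
  calc ‖fD k X H‖ = (k ! : ℝ)⁻¹ * ‖(powD k X H).trace‖ := by
        simp [fD, norm_smul, abs_of_nonneg (by positivity : (0:ℝ) ≤ (k ! : ℝ)⁻¹)]
    _ ≤ (k ! : ℝ)⁻¹ * (n * ‖powD k X H‖) := by
        have := norm_trace_le (powD k X H)
        have h0 : (0:ℝ) ≤ (k ! : ℝ)⁻¹ := by positivity
        exact mul_le_mul_of_nonneg_left this h0
    _ ≤ (k ! : ℝ)⁻¹ * (n * (k * ((n : ℝ) ^ 2 * (n * b) ^ (k - 1) * ‖H‖))) := by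
        have hs : ‖powD k X H‖ ≤ k * ((n : ℝ) ^ 2 * (n * b) ^ (k - 1) * ‖H‖) := by
          rw [powD_apply]
          calc ‖∑ i ∈ Finset.range k, X ^ i * (H * X ^ (k - 1 - i))‖
              ≤ ∑ i ∈ Finset.range k, ‖X ^ i * (H * X ^ (k - 1 - i))‖ := norm_sum_le _ _
            _ ≤ ∑ _i ∈ Finset.range k, (n : ℝ) ^ 2 * (n * b) ^ (k - 1) * ‖H‖ :=
                Finset.sum_le_sum hterm
            _ = k * ((n : ℝ) ^ 2 * (n * b) ^ (k - 1) * ‖H‖) := by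
                simp [Finset.sum_const]
        have h0 : (0:ℝ) ≤ (k ! : ℝ)⁻¹ * n := by positivity
        calc (k ! : ℝ)⁻¹ * (n * ‖powD k X H‖) = (k ! : ℝ)⁻¹ * n * ‖powD k X H‖ := by ring
          _ ≤ (k ! : ℝ)⁻¹ * n * (k * ((n : ℝ) ^ 2 * (n * b) ^ (k - 1) * ‖H‖)) :=
              mul_le_mul_of_nonneg_left hs h0
          _ = (k ! : ℝ)⁻¹ * (n * (k * ((n : ℝ) ^ 2 * (n * b) ^ (k - 1) * ‖H‖))) := by ring
    _ = (k ! : ℝ)⁻¹ * (k * ((n : ℝ) ^ 3 * (n * b) ^ (k - 1))) * ‖H‖ := by ring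

lemma norm_fD_le' (k : ℕ) {X : M} {b : ℝ} (hb : 0 ≤ b) (hX : ‖X‖ ≤ b) :
    ‖fD k X‖ ≤ (n : ℝ) ^ 3 * ((n * b) ^ (k - 1) / (k - 1)!) := by
  refine (norm_fD_le k hb hX).trans ?_
  match k with
  | 0 => simp
  | (m+1) =>
      simp only [Nat.add_sub_cancel]
      refine le_of_eq ?_
      rw [Nat.factorial_succ]
      have hf : ((m !: ℕ) : ℝ) ≠ 0 := by positivity
      push_cast
      rw [div_eq_mul_inv]
      field_simp

lemma summable_bound (b : ℝ) :
    Summable (fun k : ℕ => (n : ℝ) ^ 3 * ((n * b) ^ (k - 1) / (k - 1)!)) := by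
  have h := (Real.summable_pow_div_factorial (n * b)).mul_left ((n : ℝ) ^ 3)
  have := (summable_nat_add_iff (f := fun k : ℕ => (n : ℝ) ^ 3 * ((n * b) ^ (k - 1) / (k - 1)!)) 1)
  rw [← this]
  simpa using h

end TraceExpAux

namespace TraceExpAux
variable {n : ℕ}
local notation "M" => Matrix (Fin n) (Fin n) ℝ

lemma summable_exp_terms (Y : M) : Summable (fun k : ℕ => (k ! : ℝ)⁻¹ • Y ^ k) := by
  refine Summable.of_norm_bounded (g := fun k : ℕ => (n * ‖Y‖) ^ k / k !)
    (Real.summable_pow_div_factorial _) fun k => ?_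
  rw [norm_smul, Real.norm_eq_abs, abs_of_nonneg (by positivity : (0:ℝ) ≤ (k ! : ℝ)⁻¹)]
  simp only [div_eq_inv_mul]
  exact mul_le_mul_of_nonneg_left (norm_pow_le Y (norm_nonneg Y) le_rfl k) (by positivity)

lemma traceExp_eq (Y : M) :
    (NormedSpace.exp Y).trace = ∑' k : ℕ, (k ! : ℝ)⁻¹ • (Y ^ k).trace := by
  have h1 : (NormedSpace.exp Y).trace = traceCLM (NormedSpace.exp Y) := rfl
  rw [h1, NormedSpace.exp_eq_tsum (𝕂 := ℝ)]
  rw [ContinuousLinearMap.map_tsum traceCLM (summable_exp_terms Y)]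
  simp

lemma traceExpMul_eq (Y H : M) :
    ((NormedSpace.exp Y) * H).trace = ∑' k : ℕ, (k ! : ℝ)⁻¹ • ((Y ^ k) * H).trace := by
  have h1 : ((NormedSpace.exp Y) * H).trace
      = (traceCLM.comp ((mulCLM : M →L[ℝ] M →L[ℝ] M).flip H)) (NormedSpace.exp Y) := rfl
  rw [h1, NormedSpace.exp_eq_tsum (𝕂 := ℝ)]
  refine (ContinuousLinearMap.map_tsum _ (summable_exp_terms Y)).trans ?_
  exact tsum_congr fun k =>
    map_smul (traceCLM.comp ((mulCLM : M →L[ℝ] M →L[ℝ] M).flip H)) ((k ! : ℝ)⁻¹) (Y ^ k)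

lemma summable_fD (X : M) {b : ℝ} (hb : 0 ≤ b) (hX : ‖X‖ ≤ b) :
    Summable (fun k : ℕ => fD k X) :=
  Summable.of_norm_bounded (summable_bound b) fun k => norm_fD_le' k hb hX

lemma fD_apply_eq (k : ℕ) (X H : M) :
    fD k X H = (k ! : ℝ)⁻¹ * (k * ((X ^ (k - 1)) * H).trace) := by
  have h1 : fD k X H = (k ! : ℝ)⁻¹ * (powD k X H).trace := rfl
  rw [h1, powD_apply]
  congr 1
  rw [Matrix.trace_sum]
  have hterm : ∀ i ∈ Finset.range k,
      (X ^ i * (H * X ^ (k - 1 - i))).trace = ((X ^ (k - 1)) * H).trace := by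
    intro i hi
    have hik : i < k := Finset.mem_range.mp hi
    rw [← mul_assoc, Matrix.trace_mul_comm (X ^ i * H) (X ^ (k - 1 - i)), ← mul_assoc,
      ← pow_add]
    have he : k - 1 - i + i = k - 1 := by omega
    rw [he]
  rw [Finset.sum_congr rfl hterm, Finset.sum_const]
  simp [nsmul_eq_mul]

lemma tsum_fD_apply (X : M) (H : M) :
    (∑' k : ℕ, fD k X) H = ((NormedSpace.exp X) * H).trace := by
  have hsum : Summable (fun k : ℕ => fD k X) := summable_fD X (norm_nonneg X) le_rfl
  have h2 : (∑' k : ℕ, fD k X) H = ∑' k : ℕ, fD k X H := by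
    exact ((ContinuousLinearMap.apply ℝ ℝ H).map_tsum hsum)
  rw [h2, traceExpMul_eq]
  have ha : Summable (fun k : ℕ => fD k X H) :=
    hsum.map (ContinuousLinearMap.apply ℝ ℝ H) (ContinuousLinearMap.apply ℝ ℝ H).continuous
  rw [Summable.tsum_eq_zero_add ha]
  have h0 : fD 0 X H = 0 := by simp [fD_apply_eq]
  rw [h0, zero_add]
  refine tsum_congr fun k => ?_
  rw [fD_apply_eq]
  simp only [Nat.add_sub_cancel, Nat.factorial_succ]
  have hf : ((k ! : ℕ) : ℝ) ≠ 0 := by positivity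
  push_cast
  rw [smul_eq_mul]
  field_simp

end TraceExpAux

namespace TraceExpAux
variable {n : ℕ}
local notation "M" => Matrix (Fin n) (Fin n) ℝ

lemma hasFDerivAt_traceExp (X₀ : M) :
    HasFDerivAt (fun Y : M => (NormedSpace.exp Y).trace) (∑' k : ℕ, fD k X₀) X₀ := by
  have hfun : (fun Y : M => (NormedSpace.exp Y).trace)
      = fun Y : M => ∑' k : ℕ, (k ! : ℝ)⁻¹ • (Y ^ k).trace := funext traceExp_eq
  rw [hfun]
  set b := ‖X₀‖ + 1 with hbdef
  have hb : (0:ℝ) ≤ b := by positivity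
  have hball : ∀ X : M, X ∈ Metric.ball X₀ 1 → ‖X‖ ≤ b := by
    intro X hX
    rw [Metric.mem_ball, dist_eq_norm] at hX
    have := norm_sub_norm_le X X₀
    linarith
  refine hasFDerivAt_tsum_of_isPreconnected
    (u := fun k : ℕ => (n : ℝ) ^ 3 * ((n * b) ^ (k - 1) / (k - 1)!))
    (summable_bound b) Metric.isOpen_ball (convex_ball X₀ 1).isPreconnected
    (fun k X _ => hasFDerivAt_fterm k X)
    (fun k X hXs => norm_fD_le' k hb (hball X hXs))
    (Metric.mem_ball_self one_pos) ?_ (Metric.mem_ball_self one_pos)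
  have h := (summable_exp_terms X₀).map (traceCLM (n := n)).toLinearMap.toAddMonoidHom
    traceCLM.continuous
  refine h.congr fun k => ?_
  simp

lemma hasFDerivAt_hadSq (A : M) :
    HasFDerivAt (fun Y : M => Y ⊙ Y)
      (((hadCLM (n := n)).isBoundedBilinearMap.deriv (A, A)).comp
        ((ContinuousLinearMap.id ℝ M).prod (ContinuousLinearMap.id ℝ M))) A := by
  have hB := (hadCLM (n := n)).isBoundedBilinearMap.hasFDerivAt (A, A)
  have hi : HasFDerivAt (fun Y : M => (Y, Y))
      ((ContinuousLinearMap.id ℝ M).prod (ContinuousLinearMap.id ℝ M)) A :=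
    (hasFDerivAt_id A).prodMk (hasFDerivAt_id A)
  exact HasFDerivAt.comp (f := fun Y : M => (Y, Y)) A hB hi

end TraceExpAux

open TraceExpAux in
theorem differentiable_trace_exp_hadamard_sq' {n : ℕ} (A : Matrix (Fin n) (Fin n) ℝ) :
    DifferentiableAt ℝ
        (fun A : Matrix (Fin n) (Fin n) ℝ => (NormedSpace.exp (A ⊙ A)).trace) A ∧
      ∀ H : Matrix (Fin n) (Fin n) ℝ,
        fderiv ℝ (fun A : Matrix (Fin n) (Fin n) ℝ => (NormedSpace.exp (A ⊙ A)).trace) A H =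
          ∑ i, ∑ j, (NormedSpace.exp (A ⊙ A)) j i * (2 * A i j) * H i j := by
  have h1 := hasFDerivAt_traceExp (n := n) (A ⊙ A)
  have h2 := hasFDerivAt_hadSq (n := n) A
  have hc := HasFDerivAt.comp (f := fun A : Matrix (Fin n) (Fin n) ℝ => A ⊙ A) A h1 h2
  have hc' : HasFDerivAt
      (fun A : Matrix (Fin n) (Fin n) ℝ => (NormedSpace.exp (A ⊙ A)).trace)
      ((∑' (k : ℕ), fD k (A ⊙ A)).comp
        (((hadCLM (n := n)).isBoundedBilinearMap.deriv (A, A)).comp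
          ((ContinuousLinearMap.id ℝ _).prod (ContinuousLinearMap.id ℝ _)))) A := hc
  refine ⟨hc'.differentiableAt, fun H => ?_⟩
  refine (congrArg (fun L => L H) hc'.fderiv).trans ?_
  have hD2 : (((hadCLM (n := n)).isBoundedBilinearMap.deriv (A, A)).comp
      ((ContinuousLinearMap.id ℝ _).prod (ContinuousLinearMap.id ℝ _))) H
      = A ⊙ H + H ⊙ A := by
    simp [IsBoundedBilinearMap.deriv_apply]
    rfl
  show (∑' k, fD k (A ⊙ A)) ((((hadCLM (n := n)).isBoundedBilinearMap.deriv (A, A)).comp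
    ((ContinuousLinearMap.id ℝ _).prod (ContinuousLinearMap.id ℝ _))) H) = _
  refine (DFunLike.congr_arg (∑' k, fD k (A ⊙ A)) hD2).trans ?_
  rw [tsum_fD_apply]
  simp only [Matrix.trace, Matrix.diag, Matrix.mul_apply, Matrix.add_apply,
    Matrix.hadamard_apply]
  rw [Finset.sum_comm]
  exact Finset.sum_congr rfl fun i _ => Finset.sum_congr rfl fun j _ => by ring


/-- The acyclicity function `h(A) = tr(expm(A ⊙ A))` is differentiable at every real
`n × n` matrix `A`, with differential `Dh(A)[H] = ∑_{i,j} (expm(A ⊙ A))_{ji} · 2A_{ij} · H_{ij}`;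
i.e. its gradient w.r.t. the trace inner product is `expm(A ⊙ A)ᵀ ⊙ 2A`. -/
theorem differentiable_trace_exp_hadamard_sq {n : ℕ} (A : Matrix (Fin n) (Fin n) ℝ) :
    DifferentiableAt ℝ
        (fun A : Matrix (Fin n) (Fin n) ℝ => (NormedSpace.exp (A ⊙ A)).trace) A ∧
      ∀ H : Matrix (Fin n) (Fin n) ℝ,
        fderiv ℝ (fun A : Matrix (Fin n) (Fin n) ℝ => (NormedSpace.exp (A ⊙ A)).trace) A H =
          ∑ i, ∑ j, (NormedSpace.exp (A ⊙ A)) j i * (2 * A i j) * H i j := by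
  exact differentiable_trace_exp_hadamard_sq' A
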